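/- In the Baumslag group G = ⟨a, b, t | t⁻¹at = b, b⁻¹ab = a²⟩ viewed as an HNN extension of H = ⟨a, b | b⁻¹ab = a²⟩ with associated subgroups ⟨a⟩ and ⟨b⟩, for any n ≥ 2 and x, y ∈ H: tⁿ y t⁻ⁿ = x in G implies x = y = 1. -/

import Mathlib

/-- The single relator `b⁻¹ a b * a⁻²` of the Baumslag–Solitar group BS(1,2),
with generators `a = FreeGroup.of 0`, `b = FreeGroup.of 1`. -/
def bsRels : Set (FreeGroup (Fin 2)) :=
  {(FreeGroup.of 1)⁻¹ * FreeGroup.of 0 * FreeGroup.of 1 * (FreeGroup.of 0 ^ 2)⁻¹}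

/-- The Baumslag–Solitar group `H = ⟨a, b ∣ b⁻¹ a b = a²⟩`. -/
abbrev BS12 : Type := PresentedGroup bsRels

noncomputable def bsA : BS12 := PresentedGroup.of 0
noncomputable def bsB : BS12 := PresentedGroup.of 1



open HNNExtension HNNExtension.NormalWord Subgroup

/-- Britton's lemma specialization: if `t^(k+1) * z * t^(-(k+1))` is in the base group,
then `z ∈ A`. -/
theorem britton_pow {G : Type*} [Group G] {A B : Subgroup G} (φ : A ≃* B)
    (k : ℕ) (z : G)
    (h : (t ^ ((k+1 : ℕ) : ℤ) * of z * t ^ (-((k+1 : ℕ) : ℤ)) : HNNExtension G A B φ) ∈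
      (of.range : Subgroup (HNNExtension G A B φ))) : z ∈ A := by
  by_contra hz
  have hchain : (List.replicate k ((1 : ℤˣ), (1 : G)) ++
      ((1 : ℤˣ), z) :: List.replicate (k+1) ((-1 : ℤˣ), (1 : G))).IsChain
      (fun a b => a.2 ∈ toSubgroup A B a.1 → a.1 = b.1) := by
    rw [List.isChain_append]
    refine ⟨List.isChain_replicate_of_rel _ (fun _ => rfl), ?_, ?_⟩
    · rw [List.isChain_cons]
      refine ⟨?_, List.isChain_replicate_of_rel _ (fun _ => rfl)⟩
      intro y hy hmem
      exact absurd hmem hz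
    · intro p hp q hq
      rcases List.mem_replicate.1 (List.mem_of_mem_getLast? hp) with ⟨-, rfl⟩
      intro _
      simp at hq
      rw [← hq]
  set w : ReducedWord G A B :=
    ⟨1, List.replicate k ((1 : ℤˣ), (1 : G)) ++
      ((1 : ℤˣ), z) :: List.replicate (k+1) ((-1 : ℤˣ), (1 : G)), hchain⟩ with hw
  have hprod : w.prod φ = t ^ ((k+1 : ℕ) : ℤ) * of z * t ^ (-((k+1 : ℕ) : ℤ)) := by
    simp only [ReducedWord.prod, hw, List.map_append, List.map_cons, List.map_replicate,
      List.prod_append, List.prod_cons, List.prod_replicate, map_one, mul_one,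
      Units.val_one, zpow_one, Units.val_neg, zpow_neg]
    rw [zpow_natCast, one_mul, ← mul_assoc, ← mul_assoc, ← pow_succ, inv_pow]
  have := ReducedWord.toList_eq_nil_of_mem_of_range φ w (by rw [hprod]; exact h)
  simp [hw] at this

/-- The exponent-of-`b` homomorphism `BS12 →* Multiplicative ℤ`, killing `a`. -/
noncomputable def bsSigma : BS12 →* Multiplicative ℤ :=
  PresentedGroup.toGroup (f := fun i : Fin 2 => if i = 0 then 1 else Multiplicative.ofAdd 1)
    (by
      intro r hr
      rcases hr with rfl
      simp)

lemma bsSigma_a : bsSigma bsA = 1 := by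
  simp [bsSigma, bsA, PresentedGroup.toGroup.of]

lemma bsSigma_b : bsSigma bsB = Multiplicative.ofAdd 1 := by
  simp [bsSigma, bsB, PresentedGroup.toGroup.of]

lemma inter_triv (z : BS12) (h1 : z ∈ zpowers bsA) (h2 : z ∈ zpowers bsB) : z = 1 := by
  rcases h1 with ⟨k, rfl⟩
  rcases h2 with ⟨m, hm⟩
  dsimp only at hm ⊢
  have h3 : bsSigma (bsA ^ k) = bsSigma (bsB ^ m) := by rw [hm]
  rw [map_zpow, map_zpow, bsSigma_a, bsSigma_b, one_zpow] at h3
  have : m = 0 := by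
    have := h3.symm
    simpa [← ofAdd_zsmul] using this
  rw [← hm, this, zpow_zero]

/-- The Baumslag group as the HNN extension of `H = BS(1,2)` with stable letter `t`
satisfying `t⁻¹⟨a⟩t = ⟨b⟩` via `a ↦ b` (in Mathlib's convention,
`HNNExtension H B A ψ` where `ψ = φ.symm : ⟨b⟩ ≃* ⟨a⟩`):
for `n ≥ 2` and `x, y ∈ H`, `tⁿ y t⁻ⁿ = x` implies `x = y = 1`. -/
theorem stmt_10 (φ : Subgroup.zpowers bsA ≃* Subgroup.zpowers bsB)
    (hφ : (φ ⟨bsA, Subgroup.mem_zpowers bsA⟩ : BS12) = bsB)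
    (n : ℕ) (hn : 2 ≤ n) (x y : BS12)
    (h : HNNExtension.t ^ (n : ℤ) *
        (HNNExtension.of y :
          HNNExtension BS12 (Subgroup.zpowers bsB) (Subgroup.zpowers bsA) φ.symm) *
        HNNExtension.t ^ (-(n : ℤ)) = HNNExtension.of x) :
    x = 1 ∧ y = 1 := by
  obtain ⟨m, rfl⟩ : ∃ m, n = m + 1 := ⟨n - 1, by omega⟩
  have hm : 1 ≤ m := by omega
  have hy : y ∈ zpowers bsB := britton_pow φ.symm m y ⟨x, h.symm⟩
  set z : BS12 := ((φ.symm ⟨y, hy⟩ : zpowers bsA) : BS12) with hzdef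
  have hconj : (t * of y * t⁻¹ :
      HNNExtension BS12 (zpowers bsB) (zpowers bsA) φ.symm) = of z :=
    (equiv_eq_conj (φ := φ.symm) ⟨y, hy⟩).symm
  have h2 : (t ^ (m : ℤ) * of z * t ^ (-(m : ℤ)) :
      HNNExtension BS12 (zpowers bsB) (zpowers bsA) φ.symm) = of x := by
    rw [← hconj, ← h]
    push_cast
    group
  have hz1 : z ∈ zpowers bsA := (φ.symm ⟨y, hy⟩).2
  obtain ⟨j, rfl⟩ : ∃ j, m = j + 1 := ⟨m - 1, by omega⟩
  have hz2 : z ∈ zpowers bsB := britton_pow φ.symm j z ⟨x, h2.symm⟩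
  have hz : z = 1 := inter_triv z hz1 hz2
  have hy1 : y = 1 := by
    have h4 : (⟨y, hy⟩ : zpowers bsB) = 1 := by
      apply φ.symm.injective
      rw [map_one]
      exact Subtype.ext hz
    exact congrArg Subtype.val h4
  refine ⟨?_, hy1⟩
  have hx : (of x : HNNExtension BS12 (zpowers bsB) (zpowers bsA) φ.symm) = of 1 := by
    rw [← h, hy1]
    simp only [map_one, mul_one]
    group
  exact of_injective φ.symm hx
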